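/- Let P be a symmetric operad in sets, i.e. a G-operad for the action operad G = Σ with π the identity. Then the associated monad P̲ on the category of sets is cartesian (P̲ preserves pullbacks and the naturality squares of its unit and multiplication are pullback squares) if and only if for every n the action of Σₙ on P(n) is free, i.e. p·σ = p implies σ is the identity permutation. -/

import Mathlib

/-- Cast an element of a dependent family along an equality of indices. -/
def castF (F : ℕ → Type) {a b : ℕ} (h : a = b) (x : F a) : F b := h ▸ x

/-- Splitting off the first summand of a sigma type over `Fin (n+1)`. -/
def sigmaFinSucc {n : ℕ} (β : Fin (n + 1) → Type) :
    (Σ i : Fin (n + 1), β i) ≃ (β 0 ⊕ Σ i : Fin n, β i.succ) where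
  toFun x := Fin.cases (motive := fun j => β j → β 0 ⊕ Σ i : Fin n, β i.succ)
    Sum.inl (fun i b => Sum.inr ⟨i, b⟩) x.1 x.2
  invFun s := Sum.elim (fun b => ⟨0, b⟩) (fun p => ⟨p.1.succ, p.2⟩) s
  left_inv x := by
    obtain ⟨i, b⟩ := x
    induction i using Fin.cases with
    | zero => rfl
    | succ i => rfl
  right_inv s := by rcases s with b | ⟨i, b⟩ <;> rfl

/-- The lexicographic identification of a disjoint union of blocks
`Fin (k 0), …, Fin (k (n-1))` (in this order) with `Fin (k 0 + ⋯ + k (n-1))`. -/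
def finSigmaEquiv : ∀ {n : ℕ} (k : Fin n → ℕ), (Σ i : Fin n, Fin (k i)) ≃ Fin (∑ i, k i)
  | 0, k => by
      haveI : IsEmpty (Fin (∑ i : Fin 0, k i)) := by
        rw [Finset.univ_eq_empty, Finset.sum_empty]; infer_instance
      exact Equiv.equivOfIsEmpty _ _
  | n + 1, k =>
      (sigmaFinSucc fun i => Fin (k i)).trans <|
        ((Equiv.sumCongr (Equiv.refl (Fin (k 0))) (finSigmaEquiv fun i => k i.succ)).trans
          (finSumFinEquiv.trans (finCongr (Fin.sum_univ_succ k).symm)))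

/-- Operadic composition in the symmetric operad:
`μ(σ; τ₁, …, τₙ) = σ⁺ · (τ₁ ⊕ ⋯ ⊕ τₙ)`. -/
def permOperadComp {n : ℕ} (k : Fin n → ℕ) (σ : Equiv.Perm (Fin n))
    (τ : ∀ i, Equiv.Perm (Fin (k i))) : Equiv.Perm (Fin (∑ i, k i)) :=
  (finSigmaEquiv k).symm.trans <|
    ((Equiv.sigmaCongr (β₂ := fun j => Fin (k (σ.symm j))) σ
        fun i => (τ i).trans (finCongr (congrArg k (σ.symm_apply_apply i).symm))).trans
      ((finSigmaEquiv fun j => k (σ.symm j)).trans (finCongr (Equiv.sum_comp σ.symm k))))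

lemma sum_sigma_eq {n : ℕ} (k : Fin n → ℕ) (m : ∀ i, Fin (k i) → ℕ) :
    (∑ s : Fin (∑ i, k i), m ((finSigmaEquiv k).symm s).1 ((finSigmaEquiv k).symm s).2)
      = ∑ i, ∑ j, m i j := by
  have h := Equiv.sum_comp (finSigmaEquiv k)
    (fun s => m ((finSigmaEquiv k).symm s).1 ((finSigmaEquiv k).symm s).2)
  rw [← h]
  have h2 : ∀ p : (i : Fin n) × Fin (k i),
      m ((finSigmaEquiv k).symm ((finSigmaEquiv k) p)).fst
          ((finSigmaEquiv k).symm ((finSigmaEquiv k) p)).snd = m p.1 p.2 := by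
    intro p; rw [Equiv.symm_apply_apply]
  rw [Finset.sum_congr rfl fun p _ => h2 p, ← Finset.univ_sigma_univ, Finset.sum_sigma]
/-- An action operad: an operad in sets whose levels are groups, with a map to the
symmetric operad that is levelwise a group homomorphism and an operad map, and
satisfying the exchange law relating group multiplication and operadic composition. -/
structure ActionOperad (G : ℕ → Type) [∀ n, Group (G n)] where
  /-- the operadic unit `id ∈ G(1)` -/
  unit : G 1
  /-- operadic composition `μ : G(n) × G(k₁) × ⋯ × G(kₙ) → G(k₁+⋯+kₙ)` -/
  comp : ∀ {n : ℕ} {k : Fin n → ℕ}, G n → (∀ i, G (k i)) → G (∑ i, k i)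
  /-- the underlying-permutation group homomorphisms `πₙ : G(n) → Σₙ` -/
  π : ∀ n : ℕ, G n →* Equiv.Perm (Fin n)
  /-- `μ(id; x) = x` -/
  unit_comp : ∀ {n : ℕ} (x : G n),
    castF G (Fin.sum_univ_one fun _ => n) (comp unit fun _ : Fin 1 => x) = x
  /-- `μ(x; id, …, id) = x` -/
  comp_unit : ∀ {n : ℕ} (x : G n),
    castF G (by simp : (∑ _i : Fin n, 1) = n) (comp x fun _ : Fin n => unit) = x
  /-- associativity of operadic composition -/
  comp_assoc : ∀ {n : ℕ} {k : Fin n → ℕ} {m : ∀ i, Fin (k i) → ℕ}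
      (x : G n) (y : ∀ i, G (k i)) (z : ∀ i j, G (m i j)),
      castF G (sum_sigma_eq k m)
        (comp (comp x y) fun s => z ((finSigmaEquiv k).symm s).1 ((finSigmaEquiv k).symm s).2)
        = comp x fun i => comp (y i) (z i)
  /-- `π` preserves the operadic unit -/
  π_unit : π 1 unit = 1
  /-- `π` is a map of operads -/
  π_comp : ∀ {n : ℕ} {k : Fin n → ℕ} (g : G n) (f : ∀ i, G (k i)),
      π _ (comp g f) = permOperadComp k (π n g) fun i => π _ (f i)
  /-- the exchange law
  `μ(g; f₁,…,fₙ)·μ(g′; f₁′,…,fₙ′) = μ(g·g′; f_{π(g′)(1)}·f₁′, …, f_{π(g′)(n)}·fₙ′)` -/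
  exchange : ∀ {n : ℕ} {k : Fin n → ℕ} (g g' : G n)
      (f : ∀ i, G (k ((π n g').symm i))) (f' : ∀ i, G (k i)),
      castF G (Equiv.sum_comp (π n g').symm k) (comp g f) * comp g' f'
        = comp (g * g') fun i =>
            castF G (congrArg k ((π n g').symm_apply_apply i)) (f (π n g' i)) * f' i

/-- A `G`-operad for an action operad `G`: an operad `P` in sets together with a
right `G(n)`-action on each `P(n)` satisfying the two equivariance axioms. -/
structure GOperad (G : ℕ → Type) [∀ n, Group (G n)] (A : ActionOperad G) where
  /-- the underlying family of sets -/
  P : ℕ → Type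
  /-- the operadic unit `id ∈ P(1)` -/
  unit : P 1
  /-- operadic composition -/
  comp : ∀ {n : ℕ} {k : Fin n → ℕ}, P n → (∀ i, P (k i)) → P (∑ i, k i)
  /-- the right `G(n)`-action on `P(n)` -/
  act : ∀ {n : ℕ}, P n → G n → P n
  act_one : ∀ {n : ℕ} (x : P n), act x 1 = x
  act_mul : ∀ {n : ℕ} (x : P n) (g h : G n), act x (g * h) = act (act x g) h
  unit_comp : ∀ {n : ℕ} (x : P n),
    castF P (Fin.sum_univ_one fun _ => n) (comp unit fun _ : Fin 1 => x) = x
  comp_unit : ∀ {n : ℕ} (x : P n),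
    castF P (by simp : (∑ _i : Fin n, 1) = n) (comp x fun _ : Fin n => unit) = x
  comp_assoc : ∀ {n : ℕ} {k : Fin n → ℕ} {m : ∀ i, Fin (k i) → ℕ}
      (x : P n) (y : ∀ i, P (k i)) (z : ∀ i j, P (m i j)),
      castF P (sum_sigma_eq k m)
        (comp (comp x y) fun s => z ((finSigmaEquiv k).symm s).1 ((finSigmaEquiv k).symm s).2)
        = comp x fun i => comp (y i) (z i)
  /-- `μ(x; y₁·g₁, …, yₙ·gₙ) = μ(x; y₁, …, yₙ)·μ(e; g₁, …, gₙ)` -/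
  equiv_inner : ∀ {n : ℕ} {k : Fin n → ℕ} (x : P n) (y : ∀ i, P (k i))
      (g : ∀ i, G (k i)),
      comp x (fun i => act (y i) (g i)) = act (comp x y) (A.comp (1 : G n) g)
  /-- `μ(x·g; y₁, …, yₙ) = μ(x; y_{π(g)⁻¹(1)}, …, y_{π(g)⁻¹(n)})·μ(g; e, …, e)` -/
  equiv_outer : ∀ {n : ℕ} {k : Fin n → ℕ} (x : P n) (g : G n) (y : ∀ i, P (k i)),
      comp (act x g) y
        = castF P (Equiv.sum_comp (A.π n g).symm k)
            (act (comp x fun i => y ((A.π n g).symm i))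
              (A.comp g fun i => (1 : G (k ((A.π n g).symm i)))))

open CategoryTheory

variable {G : ℕ → Type} [∀ n, Group (G n)] {A : ActionOperad G}

/-- The relation `(p·g; x₁,…,xₙ) ∼ (p; x_{π(g)⁻¹(1)},…,x_{π(g)⁻¹(n)})` defining the
quotient `P(n) ×_{G(n)} Xⁿ`. -/
def PRel (P : GOperad G A) (n : ℕ) (X : Type) :
    P.P n × (Fin n → X) → P.P n × (Fin n → X) → Prop :=
  fun a b => ∃ g : G n, a.1 = P.act b.1 g ∧ ∀ i, b.2 i = a.2 ((A.π n g).symm i)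

/-- The value `P̲(X) = ∐ₙ P(n) ×_{G(n)} Xⁿ` of the endofunctor associated to a
`G`-operad `P`. -/
def PApply (P : GOperad G A) (X : Type) : Type :=
  Σ n : ℕ, Quot (PRel P n X)

/-- The endofunctor `P̲` of the category of sets associated to a `G`-operad `P`. -/
def PEndofunctor (P : GOperad G A) : Type ⥤ Type where
  obj X := PApply P X
  map {X Y} f := TypeCat.ofHom fun z =>
    ⟨z.1, Quot.lift (fun a => Quot.mk _ (a.1, fun i => f (a.2 i)))
      (by
        rintro a b ⟨g, h1, h2⟩
        exact Quot.sound ⟨g, h1, fun i => by show f (b.2 i) = f (a.2 _); rw [h2 i]⟩) z.2⟩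
  map_id X := by
    apply ConcreteCategory.hom_ext; intro z
    obtain ⟨n, q⟩ := z
    induction q using Quot.ind with
    | _ a => rfl
  map_comp {X Y Z} f g := by
    apply ConcreteCategory.hom_ext; intro z
    obtain ⟨n, q⟩ := z
    induction q using Quot.ind with
    | _ a => rfl

/-- The unit `η_X : X → P̲(X)`, `x ↦ [id; x]`, of the monad associated to a
`G`-operad `P`. -/
def pUnitMap (P : GOperad G A) (X : Type) : X ⟶ (PEndofunctor P).obj X :=
  TypeCat.ofHom fun x => ⟨1, Quot.mk _ (P.unit, fun _ => x)⟩

/-- The defining formula of the multiplication of the monad `P̲`. -/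
def IsPMulMap (P : GOperad G A)
    (mu : ∀ X : Type, (PEndofunctor P).obj ((PEndofunctor P).obj X) ⟶
      (PEndofunctor P).obj X) : Prop :=
  ∀ (X : Type) (n : ℕ) (k : Fin n → ℕ) (p : P.P n) (q : ∀ i, P.P (k i))
      (xs : ∀ i, Fin (k i) → X),
    mu X ⟨n, Quot.mk _ (p, fun i => ⟨k i, Quot.mk _ (q i, xs i)⟩)⟩
      = ⟨∑ i, k i, Quot.mk _ (P.comp p q,
          fun s => xs ((finSigmaEquiv k).symm s).1 ((finSigmaEquiv k).symm s).2)⟩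

/-- The monad `P̲` associated with a `G`-operad is cartesian: it preserves pullbacks
and the naturality squares of its unit and multiplication are pullback squares. -/
def PMonadCartesian (P : GOperad G A) : Prop :=
  Nonempty (Limits.PreservesLimitsOfShape Limits.WalkingCospan
      (PEndofunctor P)) ∧
    (∀ (X Y : Type) (f : X ⟶ Y),
      IsPullback (pUnitMap P X) f ((PEndofunctor P).map f) (pUnitMap P Y)) ∧
    ∀ (mu : ∀ X : Type, (PEndofunctor P).obj ((PEndofunctor P).obj X) ⟶
        (PEndofunctor P).obj X), IsPMulMap P mu →
      ∀ (X Y : Type) (f : X ⟶ Y),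
        IsPullback (mu X) ((PEndofunctor P).map ((PEndofunctor P).map f))
          ((PEndofunctor P).map f) (mu Y)


open CategoryTheory.Limits

lemma types_isPullback {P X Y Z : Type} {fst : P ⟶ X} {snd : P ⟶ Y} {f : X ⟶ Z} {g : Y ⟶ Z} :
    IsPullback fst snd f g ↔
      ((∀ p, f (fst p) = g (snd p)) ∧
        ∀ x y, f x = g y → ∃! p, fst p = x ∧ snd p = y) := by
  constructor
  · intro h
    refine ⟨fun p => ConcreteCategory.congr_hom h.w p, fun x y hxy => ?_⟩
    refine ⟨h.lift (TypeCat.ofHom fun _ : PUnit.{1} => x) (TypeCat.ofHom fun _ => y) (ConcreteCategory.hom_ext _ _ fun _ => hxy) PUnit.unit,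
      ⟨ConcreteCategory.congr_hom (h.lift_fst (TypeCat.ofHom fun _ : PUnit.{1} => x) (TypeCat.ofHom fun _ => y) (ConcreteCategory.hom_ext _ _ fun _ => hxy)) PUnit.unit,
       ConcreteCategory.congr_hom (h.lift_snd (TypeCat.ofHom fun _ : PUnit.{1} => x) (TypeCat.ofHom fun _ => y) (ConcreteCategory.hom_ext _ _ fun _ => hxy)) PUnit.unit⟩, ?_⟩
    rintro p ⟨hp1, hp2⟩
    have := h.hom_ext (k := TypeCat.ofHom fun _ : PUnit.{1} => p)
      (l := h.lift (TypeCat.ofHom fun _ : PUnit.{1} => x) (TypeCat.ofHom fun _ => y) (ConcreteCategory.hom_ext _ _ fun _ => hxy))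
      (ConcreteCategory.hom_ext _ _ fun _ => hp1.trans (ConcreteCategory.congr_hom (h.lift_fst (TypeCat.ofHom fun _ : PUnit.{1} => x) (TypeCat.ofHom fun _ => y)
        (ConcreteCategory.hom_ext _ _ fun _ => hxy)) PUnit.unit).symm)
      (ConcreteCategory.hom_ext _ _ fun _ => hp2.trans (ConcreteCategory.congr_hom (h.lift_snd (TypeCat.ofHom fun _ : PUnit.{1} => x) (TypeCat.ofHom fun _ => y)
        (ConcreteCategory.hom_ext _ _ fun _ => hxy)) PUnit.unit).symm)
    exact ConcreteCategory.congr_hom this PUnit.unit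
  · rintro ⟨hcomm, huniq⟩
    apply IsPullback.of_isLimit' ⟨ConcreteCategory.hom_ext _ _ hcomm⟩
    apply PullbackCone.IsLimit.mk
    case lift =>
      exact fun s => TypeCat.ofHom fun a => (huniq (s.fst a) (s.snd a) (ConcreteCategory.congr_hom s.condition a)).choose
    case fac_left =>
      intro s
      exact ConcreteCategory.hom_ext _ _ fun a => (huniq (s.fst a) (s.snd a) (ConcreteCategory.congr_hom s.condition a)).choose_spec.1.1
    case fac_right =>
      intro s
      exact ConcreteCategory.hom_ext _ _ fun a => (huniq (s.fst a) (s.snd a) (ConcreteCategory.congr_hom s.condition a)).choose_spec.1.2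
    case uniq =>
      intro s m h1 h2
      exact ConcreteCategory.hom_ext _ _ fun a => (huniq (s.fst a) (s.snd a) (ConcreteCategory.congr_hom s.condition a)).choose_spec.2
        (m a) ⟨ConcreteCategory.congr_hom h1 a, ConcreteCategory.congr_hom h2 a⟩

lemma po_prel_equivalence (P : GOperad G A) (n : ℕ) (X : Type) : Equivalence (PRel P n X) := by
  constructor
  · intro a
    refine ⟨1, (P.act_one a.1).symm, fun i => ?_⟩
    rw [map_one]
    rfl
  · rintro a b ⟨g, h1, h2⟩
    refine ⟨g⁻¹, ?_, fun i => ?_⟩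
    · rw [h1, ← P.act_mul, mul_inv_cancel, P.act_one]
    · have h3 := h2 ((A.π n g) i)
      rw [Equiv.symm_apply_apply] at h3
      rw [map_inv]
      exact h3.symm
  · rintro a b c ⟨g, h1, h2⟩ ⟨g', h1', h2'⟩
    refine ⟨g' * g, ?_, fun i => ?_⟩
    · rw [h1, h1', P.act_mul]
    · rw [map_mul]
      exact (h2' i).trans (h2 ((A.π n g').symm i))

lemma po_sound (P : GOperad G A) {X : Type} {n : ℕ} {a b : P.P n × (Fin n → X)}
    (h : PRel P n X a b) :
    (⟨n, Quot.mk _ a⟩ : PApply P X) = ⟨n, Quot.mk _ b⟩ :=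
  congrArg (fun c => (⟨n, c⟩ : PApply P X)) (Quot.sound h)

lemma po_exact (P : GOperad G A) {X : Type} {n : ℕ} {a b : P.P n × (Fin n → X)}
    (h : (⟨n, Quot.mk _ a⟩ : PApply P X) = ⟨n, Quot.mk _ b⟩) : PRel P n X a b := by
  have h2 : (Quot.mk (PRel P n X) a) = Quot.mk (PRel P n X) b := by
    exact eq_of_heq (Sigma.ext_iff.mp h).2
  exact ((po_prel_equivalence P n X).eqvGen_iff).mp (Quot.eqvGen_exact h2)

lemma po_cases (P : GOperad G A) {X : Type} (z : PApply P X) :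
    ∃ (n : ℕ) (p : P.P n) (x : Fin n → X), z = ⟨n, Quot.mk _ (p, x)⟩ := by
  obtain ⟨n, c⟩ := z
  obtain ⟨a, ha⟩ := Quot.exists_rep c
  exact ⟨n, a.1, a.2, congrArg (fun q => (⟨n, q⟩ : PApply P X)) ha.symm⟩

lemma po_fun_cases (P : GOperad G A) {X : Type} (n : ℕ) (v : Fin n → PApply P X) :
    ∃ (k : Fin n → ℕ) (q : ∀ i, P.P (k i)) (xs : ∀ i, Fin (k i) → X),
      v = fun i => ⟨k i, Quot.mk _ (q i, xs i)⟩ := by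
  choose a ha using fun i => Quot.exists_rep (v i).2
  refine ⟨fun i => (v i).1, fun i => (a i).1, fun i => (a i).2, funext fun i => ?_⟩
  exact congrArg (fun c => (⟨(v i).1, c⟩ : PApply P X)) (ha i).symm

lemma po_map_mk (P : GOperad G A) {X Y : Type} (f : X ⟶ Y) {n : ℕ} (p : P.P n)
    (x : Fin n → X) :
    (PEndofunctor P).map f ⟨n, Quot.mk _ (p, x)⟩ = ⟨n, Quot.mk _ (p, fun i => f (x i))⟩ :=
  rfl

lemma po_norm (P : GOperad G A) {X Y : Type} (f : X ⟶ Y) (z : PApply P X) (m : ℕ)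
    (r : P.P m) (y : Fin m → Y)
    (h : (PEndofunctor P).map f z = ⟨m, Quot.mk _ (r, y)⟩) :
    ∃ x : Fin m → X, z = ⟨m, Quot.mk _ (r, x)⟩ ∧ ∀ i, f (x i) = y i := by
  obtain ⟨m', s, x', rfl⟩ := po_cases P z
  rw [po_map_mk] at h
  have hm : m' = m := congrArg Sigma.fst h
  subst hm
  obtain ⟨τ, h1, h2⟩ := po_exact P h
  refine ⟨fun i => x' ((A.π m' τ).symm i), ?_, fun i => (h2 i).symm⟩
  have h1' : s = P.act r τ := h1
  rw [h1']
  exact po_sound P ⟨τ, rfl, fun i => rfl⟩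


lemma po_unit_square (P : GOperad G A) {X Y : Type} (f : X ⟶ Y) :
    IsPullback (pUnitMap P X) f ((PEndofunctor P).map f) (pUnitMap P Y) := by
  apply types_isPullback.mpr
  refine ⟨fun x => rfl, fun a y hab => ?_⟩
  obtain ⟨xb, ha, hfx⟩ := po_norm P f a 1 P.unit (fun _ => y) hab
  refine ⟨xb 0, ⟨?_, hfx 0⟩, ?_⟩
  · rw [ha]
    exact congrArg (fun c => (⟨1, Quot.mk _ (P.unit, c)⟩ : PApply P X))
      (funext fun i => congrArg xb (Subsingleton.elim 0 i))
  · rintro x' ⟨hx', -⟩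
    obtain ⟨g, -, h⟩ := po_exact P (hx'.trans ha)
    exact (h 0).symm

lemma po_pres_key (P : GOperad G A)
    (hfree : ∀ (n : ℕ) (p : P.P n) (g : G n), P.act p g = p → g = 1)
    {X Y Z : Type} (f : X ⟶ Z) (g : Y ⟶ Z) :
    IsPullback ((PEndofunctor P).map (TypeCat.ofHom fun w : {xy : X × Y // f xy.1 = g xy.2} => w.1.1))
      ((PEndofunctor P).map (TypeCat.ofHom fun w : {xy : X × Y // f xy.1 = g xy.2} => w.1.2))
      ((PEndofunctor P).map f) ((PEndofunctor P).map g) := by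
  apply types_isPullback.mpr
  constructor
  · intro w
    obtain ⟨n, p, z, rfl⟩ := po_cases P w
    exact congrArg (fun c => (⟨n, Quot.mk _ (p, c)⟩ : PApply P Z)) (funext fun i => (z i).2)
  · intro a b hab
    obtain ⟨n, p, x, rfl⟩ := po_cases P a
    obtain ⟨m, q, y, rfl⟩ := po_cases P b
    rw [po_map_mk, po_map_mk] at hab
    have hnm : n = m := congrArg Sigma.fst hab
    subst hnm
    obtain ⟨σ, h1, h2⟩ := po_exact P hab
    have h1' : p = P.act q σ := h1
    have hpf : ∀ i, f (x i) = g (y ((A.π n σ) i)) := fun i =>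
      ((h2 ((A.π n σ) i)).trans
        (congrArg (fun t => f (x t)) ((A.π n σ).symm_apply_apply i))).symm
    have hsnd0 : (⟨n, Quot.mk _ (p, fun i => y ((A.π n σ) i))⟩ : PApply P Y)
        = ⟨n, Quot.mk _ (q, y)⟩ :=
      po_sound P ⟨σ, h1', fun i => (congrArg y ((A.π n σ).apply_symm_apply i)).symm⟩
    refine ⟨⟨n, Quot.mk _ (p, fun i => ⟨(x i, y ((A.π n σ) i)), hpf i⟩)⟩, ⟨rfl, hsnd0⟩, ?_⟩
    rintro w' ⟨hf', hg'⟩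
    obtain ⟨z', hw', hz'⟩ := po_norm P (TypeCat.ofHom fun w : {xy : X × Y // f xy.1 = g xy.2} => w.1.1)
      w' n p x hf'
    rw [hw']
    have hb := hg'.trans hsnd0.symm
    rw [hw', po_map_mk] at hb
    obtain ⟨ρ, hρ, hzz⟩ := po_exact P hb
    have hρ' : P.act p ρ = p := (show p = P.act p ρ from hρ).symm
    have h5 : ρ = 1 := hfree _ _ ρ hρ'
    subst h5
    refine congrArg (fun c => (⟨n, Quot.mk _ (p, c)⟩ :
      PApply P {xy : X × Y // f xy.1 = g xy.2})) (funext fun i => ?_)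
    refine Subtype.ext (Prod.ext (hz' i) ?_)
    have h6 := hzz i
    rw [map_one] at h6
    exact h6.symm

lemma po_pres (P : GOperad G A)
    (hfree : ∀ (n : ℕ) (p : P.P n) (g : G n), P.act p g = p → g = 1) :
    PreservesLimitsOfShape WalkingCospan (PEndofunctor P) := by
  constructor
  intro K
  haveI : PreservesLimit (cospan (K.map WalkingCospan.Hom.inl) (K.map WalkingCospan.Hom.inr))
      (PEndofunctor P) := by
    have base : IsPullback
        (TypeCat.ofHom fun w : {xy : K.obj .left × K.obj .right //
            K.map WalkingCospan.Hom.inl xy.1 = K.map WalkingCospan.Hom.inr xy.2} => w.1.1)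
        (TypeCat.ofHom fun w : {xy : K.obj .left × K.obj .right //
            K.map WalkingCospan.Hom.inl xy.1 = K.map WalkingCospan.Hom.inr xy.2} => w.1.2) (K.map WalkingCospan.Hom.inl) (K.map WalkingCospan.Hom.inr) :=
      types_isPullback.mpr ⟨fun w => w.2, fun x y hxy =>
        ⟨⟨(x, y), hxy⟩, ⟨rfl, rfl⟩, fun w hw => Subtype.ext (Prod.ext hw.1 hw.2)⟩⟩
    exact preservesLimit_of_preserves_limit_cone base.isLimit
      ((isLimitMapConePullbackConeEquiv (PEndofunctor P) base.w).symm
        (po_pres_key P hfree _ _).isLimit)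
  exact preservesLimit_of_iso_diagram (PEndofunctor P) (diagramIsoCospan K).symm

lemma po_mult_square (P : GOperad G A)
    (hfree : ∀ (n : ℕ) (p : P.P n) (g : G n), P.act p g = p → g = 1)
    (mu : ∀ X : Type, (PEndofunctor P).obj ((PEndofunctor P).obj X) ⟶ (PEndofunctor P).obj X)
    (hmu : IsPMulMap P mu) {X Y : Type} (f : X ⟶ Y) :
    IsPullback (mu X) ((PEndofunctor P).map ((PEndofunctor P).map f))
      ((PEndofunctor P).map f) (mu Y) := by
  apply types_isPullback.mpr
  constructor
  · intro w
    obtain ⟨n, p, v, rfl⟩ := po_cases P w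
    obtain ⟨k, q, xs, rfl⟩ := po_fun_cases P n v
    exact (congrArg ((PEndofunctor P).map f) (hmu X n k p q xs)).trans
      ((hmu Y n k p q (fun i j => f (xs i j))).symm)
  · intro a b hab
    obtain ⟨n, p, v, rfl⟩ := po_cases P b
    obtain ⟨k, q, ys, rfl⟩ := po_fun_cases P n v
    obtain ⟨xb, hxb, hfxb⟩ := po_norm P f a _ _ _ (hab.trans (hmu Y n k p q ys))
    refine ⟨⟨n, Quot.mk _ (p, fun i =>
      (⟨k i, Quot.mk _ (q i, fun j => xb (finSigmaEquiv k ⟨i, j⟩))⟩ : PApply P X))⟩,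
      ⟨?_, ?_⟩, ?_⟩
    · exact (hmu X n k p q (fun i j => xb (finSigmaEquiv k ⟨i, j⟩))).trans
        ((congrArg (fun c => (⟨∑ i, k i, Quot.mk _ (P.comp p q, c)⟩ : PApply P X))
          (funext fun s => congrArg xb ((finSigmaEquiv k).apply_symm_apply s))).trans
            hxb.symm)
    · exact congrArg (fun c => (⟨n, Quot.mk _ (p, c)⟩ : PApply P (PApply P Y)))
        (funext fun i => congrArg (fun c => (⟨k i, Quot.mk _ (q i, c)⟩ : PApply P Y))
          (funext fun j => (hfxb (finSigmaEquiv k ⟨i, j⟩)).trans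
            (congrArg (fun pr : Σ i, Fin (k i) => ys pr.1 pr.2)
              ((finSigmaEquiv k).symm_apply_apply ⟨i, j⟩))))
    · rintro w' ⟨h1, h2⟩
      obtain ⟨V, hw', hV⟩ := po_norm P ((PEndofunctor P).map f) w' n p _ h2
      choose xs' hxs' hfxs' using fun i => po_norm P f (V i) (k i) (q i) (ys i) (hV i)
      have hw'2 : w' = ⟨n, Quot.mk _ (p, fun i =>
          (⟨k i, Quot.mk _ (q i, xs' i)⟩ : PApply P X))⟩ :=
        hw'.trans (congrArg (fun c => (⟨n, Quot.mk _ (p, c)⟩ : PApply P (PApply P X)))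
          (funext hxs'))
      have h1' : (⟨∑ i, k i, Quot.mk _ (P.comp p q,
          fun s => xs' ((finSigmaEquiv k).symm s).1 ((finSigmaEquiv k).symm s).2)⟩ :
            PApply P X) = ⟨∑ i, k i, Quot.mk _ (P.comp p q, xb)⟩ :=
        (hmu X n k p q xs').symm.trans ((congrArg (mu X) hw'2).symm.trans (h1.trans hxb))
      obtain ⟨ρ, hρ, hF⟩ := po_exact P h1'
      have hρ' : P.act (P.comp p q) ρ = P.comp p q := (show _ = P.act _ ρ from hρ).symm
      have h5 : ρ = 1 := hfree _ _ ρ hρ'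
      subst h5
      rw [hw'2]
      refine congrArg (fun c => (⟨n, Quot.mk _ (p, c)⟩ : PApply P (PApply P X)))
        (funext fun i => congrArg (fun c => (⟨k i, Quot.mk _ (q i, c)⟩ : PApply P X))
          (funext fun j => ?_))
      have h3 := hF (finSigmaEquiv k ⟨i, j⟩)
      rw [map_one] at h3
      exact (congrArg (fun pr : Σ i, Fin (k i) => xs' pr.1 pr.2)
        ((finSigmaEquiv k).symm_apply_apply ⟨i, j⟩)).symm.trans h3.symm

/-- Let `P` be a symmetric operad, i.e. a `G`-operad for the
action operad of symmetric groups (operadic composition given by block composition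
of permutations, with `π` the identity).  Then the associated monad `P̲` on sets is
cartesian if and only if each action of `Σₙ` on `P(n)` is free. -/
theorem symmetricOperad_cartesian_iff_free
    (A : ActionOperad (fun n => Equiv.Perm (Fin n)))
    (hπ : ∀ n, A.π n = MonoidHom.id (Equiv.Perm (Fin n)))
    (hμ : ∀ (n : ℕ) (k : Fin n → ℕ) (σ : Equiv.Perm (Fin n))
      (τ : ∀ i, Equiv.Perm (Fin (k i))), A.comp σ τ = permOperadComp k σ τ)
    (P : GOperad (fun n => Equiv.Perm (Fin n)) A) :
    PMonadCartesian P ↔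
      ∀ (n : ℕ) (p : P.P n) (σ : Equiv.Perm (Fin n)), P.act p σ = p → σ = 1 := by
  have hπ' : ∀ (m : ℕ) (g : Equiv.Perm (Fin m)), A.π m g = g := fun m g => by rw [hπ m]; rfl
  constructor
  · rintro ⟨⟨pres⟩, -, -⟩ n p σ hfix
    haveI := pres
    haveI : PreservesLimit (cospan (TypeCat.ofHom fun _ : Fin n => (PUnit.unit : PUnit.{1}))
        (TypeCat.ofHom fun _ : Fin n => (PUnit.unit : PUnit.{1}))) (PEndofunctor P) :=
      PreservesLimitsOfShape.preservesLimit
    have bsq : IsPullback (TypeCat.ofHom (Prod.fst : Fin n × Fin n → Fin n))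
        (TypeCat.ofHom (Prod.snd : Fin n × Fin n → Fin n))
        (TypeCat.ofHom fun _ : Fin n => (PUnit.unit : PUnit.{1}))
        (TypeCat.ofHom fun _ : Fin n => (PUnit.unit : PUnit.{1})) :=
      types_isPullback.mpr ⟨fun _ => rfl, fun x y _ =>
        ⟨(x, y), ⟨rfl, rfl⟩, fun w hw => Prod.ext hw.1 hw.2⟩⟩
    have msq := bsq.map (PEndofunctor P)
    obtain ⟨hcomm, helem⟩ := types_isPullback.mp msq
    obtain ⟨w, -, hu⟩ := helem
      ((PEndofunctor P).map (TypeCat.ofHom (Prod.fst : Fin n × Fin n → Fin n)) ⟨n, Quot.mk _ (p, fun i => (i, i))⟩)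
      ((PEndofunctor P).map (TypeCat.ofHom (Prod.snd : Fin n × Fin n → Fin n)) ⟨n, Quot.mk _ (p, fun i => (i, i))⟩)
      (hcomm ⟨n, Quot.mk _ (p, fun i => (i, i))⟩)
    have hsnd : (PEndofunctor P).map (TypeCat.ofHom (Prod.snd : Fin n × Fin n → Fin n))
        (⟨n, Quot.mk _ (p, fun i => (i, σ i))⟩ : PApply P (Fin n × Fin n))
        = (PEndofunctor P).map (TypeCat.ofHom (Prod.snd : Fin n × Fin n → Fin n))
          (⟨n, Quot.mk _ (p, fun i => (i, i))⟩ : PApply P (Fin n × Fin n)) := by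
      refine po_sound P ⟨σ, hfix.symm, fun i => ?_⟩
      show i = σ ((A.π n σ).symm i)
      rw [hπ' n σ]
      exact (σ.apply_symm_apply i).symm
    have e1 := hu ⟨n, Quot.mk _ (p, fun i => (i, i))⟩ ⟨rfl, rfl⟩
    have e2 := hu ⟨n, Quot.mk _ (p, fun i => (i, σ i))⟩ ⟨rfl, hsnd⟩
    obtain ⟨g, -, hg⟩ := po_exact P (e1.trans e2.symm)
    refine Equiv.ext fun i => ?_
    have hfst := congrArg Prod.fst (hg i)
    have hsnd2 := congrArg Prod.snd (hg i)
    simpa using hsnd2.trans hfst.symm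
  · intro hfree
    exact ⟨⟨po_pres P hfree⟩, fun X Y f => po_unit_square P f,
      fun mu hmu X Y f => po_mult_square P hfree mu hmu f⟩
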